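/- Let A, B be Hermitian operators on a finite-dimensional complex Hilbert space H with dim H ≥ 1. Suppose that for every density matrix ρ on H, Tr(∑_x Π_x ρ Π_x · Q_y) = Tr(ρ Q_y) for every spectral projection Q_y of B, where (Π_x) are the spectral projections of A. Then [A, B] = 0. -/

import Mathlib

open Matrix Kronecker BigOperators
open scoped ComplexOrder InnerProductSpace

noncomputable section

/-- Partial trace over the first tensor factor. -/
def ptrace1 {n m : Type} [Fintype n] (ρ : Matrix (n × m) (n × m) ℂ) : Matrix m m ℂ :=
  Matrix.of fun k l => ∑ i, ρ (i, k) (i, l)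

/-- A density matrix: positive semidefinite with trace one. -/
def IsDensityMatrix {d : Type} [Fintype d] [DecidableEq d] (ρ : Matrix d d ℂ) : Prop :=
  ρ.PosSemidef ∧ ρ.trace = 1

/-- A complete family of mutually orthogonal Hermitian projections. -/
def IsProjFamily {n ι : Type} [Fintype n] [DecidableEq n] [Fintype ι] [DecidableEq ι]
    (P : ι → Matrix n n ℂ) : Prop :=
  (∀ i, (P i).IsHermitian) ∧ (∀ i j, P i * P j = if i = j then P i else 0) ∧ ∑ i, P i = 1

/-- `(P, μ)` is the spectral decomposition of the Hermitian operator `A`. -/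
def IsSpectralDecomp {n ι : Type} [Fintype n] [DecidableEq n] [Fintype ι] [DecidableEq ι]
    (A : Matrix n n ℂ) (P : ι → Matrix n n ℂ) (μ : ι → ℝ) : Prop :=
  IsProjFamily P ∧ Function.Injective μ ∧ A = ∑ i, (μ i : ℂ) • P i

section Helpers

variable {n : Type} [Fintype n] [DecidableEq n]

lemma form_zero {D : Matrix n n ℂ} (h : ∀ v : n → ℂ, star v ⬝ᵥ (D *ᵥ v) = 0) : D = 0 := by
  have hT : Matrix.toEuclideanLin Dᴴ = 0 := by
    rw [← inner_map_self_eq_zero]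
    intro x
    have : ⟪(Matrix.toEuclideanLin Dᴴ) x, x⟫_ℂ = star (WithLp.equiv 2 (n → ℂ) x) ⬝ᵥ (D *ᵥ (WithLp.equiv 2 (n → ℂ) x)) := by
      rw [EuclideanSpace.inner_eq_star_dotProduct]
      simp only [WithLp.equiv_apply, ofLp_toEuclideanLin_apply, star_mulVec, conjTranspose_conjTranspose]
      rw [dotProduct_comm, ← Matrix.dotProduct_mulVec]
    rw [this, h]
  simpa using hT

omit [DecidableEq n] in
lemma trace_outer (v : n → ℂ) (X : Matrix n n ℂ) :
    (vecMulVec v (star v) * X).trace = star v ⬝ᵥ (X *ᵥ v) := by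
  simp only [Matrix.trace, Matrix.diag, mul_apply, vecMulVec_apply, dotProduct, mulVec,
    Pi.star_apply, Finset.mul_sum]
  rw [Finset.sum_comm]
  exact Finset.sum_congr rfl fun j _ => Finset.sum_congr rfl fun i _ => by ring

omit [DecidableEq n] in
lemma outer_density (v : n → ℂ) (hv : star v ⬝ᵥ v = 1) :
    (vecMulVec v (star v)).PosSemidef ∧ (vecMulVec v (star v)).trace = 1 := by
  refine ⟨posSemidef_iff_dotProduct_mulVec.mpr ⟨?_, ?_⟩, ?_⟩
  · ext i j
    simp [vecMulVec_apply, mul_comm]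
  · intro x
    have : star x ⬝ᵥ (vecMulVec v (star v) *ᵥ x) = star (star v ⬝ᵥ x) * (star v ⬝ᵥ x) := by
      simp only [dotProduct, mulVec, vecMulVec_apply, Pi.star_apply, star_sum, star_mul',
        Finset.mul_sum, Finset.sum_mul]
      rw [Finset.sum_comm]
      exact Finset.sum_congr rfl fun j _ => Finset.sum_congr rfl fun i _ => by
        simp; ring
    rw [this]
    exact star_mul_self_nonneg _
  · rw [← hv]
    simp [Matrix.trace, Matrix.diag, vecMulVec_apply, dotProduct, mul_comm]

end Helpers

/-- If the Born-rule probabilities for measuring `B` are unchanged when a non-selective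
projective measurement of `A` is first applied to any state, then `[A, B] = 0`. -/
theorem luders_commute_of_states
    (n : Type) [Fintype n] [DecidableEq n] [Nonempty n]
    (ι κ : Type) [Fintype ι] [DecidableEq ι] [Fintype κ] [DecidableEq κ]
    (A B : Matrix n n ℂ) (hA : A.IsHermitian) (hB : B.IsHermitian)
    (P : ι → Matrix n n ℂ) (μ : ι → ℝ) (hPA : IsSpectralDecomp A P μ)
    (Q : κ → Matrix n n ℂ) (ν : κ → ℝ) (hQB : IsSpectralDecomp B Q ν)
    (h : ∀ ρ : Matrix n n ℂ, IsDensityMatrix ρ →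
      ∀ y, ((∑ x, P x * ρ * P x) * Q y).trace = (ρ * Q y).trace) :
    A * B - B * A = 0 := by
  obtain ⟨⟨hPh, hPo, hPs⟩, _, hAeq⟩ := hPA
  obtain ⟨⟨hQh, hQo, hQs⟩, _, hBeq⟩ := hQB
  -- Step 1: the operator identity ∑ x, P x * Q y * P x = Q y
  have hop : ∀ y, (∑ x, P x * Q y * P x) = Q y := by
    intro y
    have key1 : ∀ ρ : Matrix n n ℂ,
        ((∑ x, P x * ρ * P x) * Q y).trace = (ρ * (∑ x, P x * Q y * P x)).trace := by
      intro ρ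
      rw [Finset.sum_mul, Matrix.mul_sum, Matrix.trace_sum, Matrix.trace_sum]
      refine Finset.sum_congr rfl fun x _ => ?_
      simp only [mul_assoc]
      rw [Matrix.trace_mul_comm]
      simp only [mul_assoc]
    have hform : ∀ v : n → ℂ,
        star v ⬝ᵥ (((∑ x, P x * Q y * P x) - Q y) *ᵥ v) = 0 := by
      intro v
      rcases eq_or_ne v 0 with rfl | hv
      · simp
      · obtain ⟨i0, hi0⟩ : ∃ i, v i ≠ 0 := by
          by_contra hc
          push_neg at hc
          exact hv (funext hc)
        set S : ℝ := ∑ i, Complex.normSq (v i) with hSdef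
        have hSpos : 0 < S :=
          Finset.sum_pos' (fun i _ => Complex.normSq_nonneg _)
            ⟨i0, Finset.mem_univ i0, Complex.normSq_pos.mpr hi0⟩
        set c : ℝ := (Real.sqrt S)⁻¹ with hcdef
        have hc0 : (c : ℂ) ≠ 0 := by
          simp [hcdef, Real.sqrt_eq_zero', not_le, hSpos]
        have hvS : star v ⬝ᵥ v = (S : ℂ) := by
          simp only [dotProduct, Pi.star_apply, hSdef]
          push_cast
          exact Finset.sum_congr rfl fun i _ => by
            rw [Complex.normSq_eq_conj_mul_self]; rfl
        have hcc : (c : ℂ) * (c : ℂ) * (S : ℂ) = 1 := by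
          have : c * c * S = 1 := by
            rw [hcdef, ← mul_inv, Real.mul_self_sqrt hSpos.le]
            field_simp
          exact_mod_cast this
        set u : n → ℂ := (c : ℂ) • v with hudef
        have hscale : ∀ X : Matrix n n ℂ,
            star u ⬝ᵥ (X *ᵥ u) = (c : ℂ) * (c : ℂ) * (star v ⬝ᵥ (X *ᵥ v)) := by
          intro X
          simp only [hudef, star_smul, mulVec_smul, smul_dotProduct, dotProduct_smul,
            smul_eq_mul, RCLike.star_def, Complex.conj_ofReal]
          ring
        have hu1 : star u ⬝ᵥ u = 1 := by
          simp only [hudef, star_smul, smul_dotProduct, dotProduct_smul, smul_eq_mul,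
            RCLike.star_def, Complex.conj_ofReal]
          rw [hvS]
          linear_combination hcc
        have hd := h (vecMulVec u (star u)) (outer_density u hu1) y
        rw [key1, trace_outer, trace_outer] at hd
        have h0 : star u ⬝ᵥ (((∑ x, P x * Q y * P x) - Q y) *ᵥ u) = 0 := by
          rw [Matrix.sub_mulVec, dotProduct_sub, hd, sub_self]
        rw [hscale] at h0
        exact (mul_eq_zero.mp h0).resolve_left (mul_ne_zero hc0 hc0)
    have := form_zero hform
    exact sub_eq_zero.mp this
  -- Step 2: each P x commutes with each Q y
  have hcomm : ∀ x y, P x * Q y = Q y * P x := by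
    intro x y
    have h1 : P x * Q y = P x * Q y * P x := by
      conv_lhs => rw [← hop y, Matrix.mul_sum]
      have : ∀ z, P x * (P z * Q y * P z) = if x = z then P x * Q y * P x else 0 := by
        intro z
        rw [← mul_assoc, ← mul_assoc, hPo x z]
        split
        · next hxz => subst hxz; rfl
        · simp
      simp_rw [this]
      simp
    have h2 : Q y * P x = P x * Q y * P x := by
      conv_lhs => rw [← hop y, Finset.sum_mul]
      have : ∀ z, P z * Q y * P z * P x = if z = x then P x * Q y * P x else 0 := by
        intro z
        rw [mul_assoc, hPo z x]
        split
        · next hzx => subst hzx; simp [mul_assoc]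
        · simp
      simp_rw [this]
      simp
    rw [h1, h2]
  -- Step 3: conclude
  have hAB : A * B = ∑ i, ∑ j, ((μ i : ℂ) * (ν j : ℂ)) • (P i * Q j) := by
    rw [hAeq, hBeq, Finset.sum_mul]
    refine Finset.sum_congr rfl fun i _ => ?_
    rw [Finset.mul_sum]
    refine Finset.sum_congr rfl fun j _ => ?_
    rw [smul_mul_assoc, mul_smul_comm, smul_smul]
  have hBA : B * A = ∑ j, ∑ i, ((μ i : ℂ) * (ν j : ℂ)) • (P i * Q j) := by
    rw [hAeq, hBeq, Finset.sum_mul]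
    refine Finset.sum_congr rfl fun j _ => ?_
    rw [Finset.mul_sum]
    refine Finset.sum_congr rfl fun i _ => ?_
    rw [smul_mul_assoc, mul_smul_comm, smul_smul, mul_comm ((ν j : ℂ)) ((μ i : ℂ)), hcomm]
  rw [hAB, hBA, Finset.sum_comm, sub_self]
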